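/- Input enabledness: for every configuration Γ ▷ W, every channel c and every closed value v there exists a system term W' such that Γ ▷ W --c?v--> W'. Moreover: (1) if rcv(Γ ▷ W, c) is false then W' = W; (2) if rcv(Γ ▷ W, c) holds then W' ≠ W, and for every closed value w we have Γ ▷ W --c?w--> W' (with the same residual W'). -/

import Mathlib

/- A formalization of the Calculus of Collision-prone Communicating Processes (CCCP). -/

namespace CCCP

/-- Channels are represented by natural numbers. -/
abbrev Chan : Type := ℕ

/-- A channel environment maps each channel to an exposure time and a value. -/
abbrev ChanEnv (V : Type) : Type := Chan → ℕ × V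

/-- Expressions: values and (de Bruijn) data variables. -/
inductive Exp (V : Type) : Type where
  | val (v : V)
  | var (i : ℕ)

/-- Boolean expressions: equality tests and exposure checks. -/
inductive BExp (V : Type) : Type where
  | beq (e1 e2 : Exp V)
  | exposed (c : Chan)

/-- Station code (processes).  Data variables and process (recursion) variables
are in de Bruijn style: `rcv c P Q` binds data variable 0 in `P`, and `fix P`
binds process variable 0 in `P`. -/
inductive Proc (V : Type) : Type where
  | broadcast (c : Chan) (e : Exp V) (P : Proc V)  -- c!⟨e⟩.P
  | rcv (c : Chan) (P Q : Proc V)                  -- ⌊c?(x).P⌋Q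
  | sigma (P : Proc V)                             -- σ.P
  | tau (P : Proc V)                               -- τ.P
  | sum (P Q : Proc V)                             -- P + Q
  | mtch (b : BExp V) (P Q : Proc V)               -- [b]P,Q
  | pvar (X : ℕ)                                   -- process variable
  | nil                                            -- termination
  | fix (P : Proc V)                               -- recursion

/-- System terms.  `active c P` is an active receiver c(x).P which binds data
variable 0 in `P`; `res c n v W` is the channel restriction νc:(n,v).W. -/
inductive Sys (V : Type) : Type where
  | proc (P : Proc V)
  | active (c : Chan) (P : Proc V)
  | par (W1 W2 : Sys V)
  | res (c : Chan) (n : ℕ) (v : V) (W : Sys V)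

variable {V : Type}

/-- Evaluation of closed expressions. -/
def Exp.eval : Exp V → Option V
  | .val v => some v
  | .var _ => none

def Exp.liftD : Exp V → ℕ → Exp V
  | .val v, _ => .val v
  | .var i, k => if i < k then .var i else .var (i + 1)

def Exp.substD : Exp V → ℕ → V → Exp V
  | .val w, _, _ => .val w
  | .var i, j, v => if i = j then .val v else if j < i then .var (i - 1) else .var i

def BExp.liftD : BExp V → ℕ → BExp V
  | .beq e1 e2, k => .beq (e1.liftD k) (e2.liftD k)
  | .exposed c, _ => .exposed c

def BExp.substD : BExp V → ℕ → V → BExp V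
  | .beq e1 e2, j, v => .beq (e1.substD j v) (e2.substD j v)
  | .exposed c, _, _ => .exposed c

/-- Lifting of data variables (≥ k) in a process. -/
def Proc.liftD : Proc V → ℕ → Proc V
  | .broadcast c e P, k => .broadcast c (e.liftD k) (Proc.liftD P k)
  | .rcv c P Q, k => .rcv c (Proc.liftD P (k + 1)) (Proc.liftD Q k)
  | .sigma P, k => .sigma (Proc.liftD P k)
  | .tau P, k => .tau (Proc.liftD P k)
  | .sum P Q, k => .sum (Proc.liftD P k) (Proc.liftD Q k)
  | .mtch b P Q, k => .mtch (b.liftD k) (Proc.liftD P k) (Proc.liftD Q k)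
  | .pvar X, _ => .pvar X
  | .nil, _ => .nil
  | .fix P, k => .fix (Proc.liftD P k)

/-- Substitution of a (closed) value for data variable j in a process. -/
def Proc.substD : Proc V → ℕ → V → Proc V
  | .broadcast c e P, j, v => .broadcast c (e.substD j v) (Proc.substD P j v)
  | .rcv c P Q, j, v => .rcv c (Proc.substD P (j + 1) v) (Proc.substD Q j v)
  | .sigma P, j, v => .sigma (Proc.substD P j v)
  | .tau P, j, v => .tau (Proc.substD P j v)
  | .sum P Q, j, v => .sum (Proc.substD P j v) (Proc.substD Q j v)
  | .mtch b P Q, j, v => .mtch (b.substD j v) (Proc.substD P j v) (Proc.substD Q j v)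
  | .pvar X, _, _ => .pvar X
  | .nil, _, _ => .nil
  | .fix P, j, v => .fix (Proc.substD P j v)

/-- Lifting of process variables (≥ k) in a process. -/
def Proc.liftP : Proc V → ℕ → Proc V
  | .broadcast c e P, k => .broadcast c e (Proc.liftP P k)
  | .rcv c P Q, k => .rcv c (Proc.liftP P k) (Proc.liftP Q k)
  | .sigma P, k => .sigma (Proc.liftP P k)
  | .tau P, k => .tau (Proc.liftP P k)
  | .sum P Q, k => .sum (Proc.liftP P k) (Proc.liftP Q k)
  | .mtch b P Q, k => .mtch b (Proc.liftP P k) (Proc.liftP Q k)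
  | .pvar X, k => if X < k then .pvar X else .pvar (X + 1)
  | .nil, _ => .nil
  | .fix P, k => .fix (Proc.liftP P (k + 1))

/-- Substitution of a process S for process variable j (used for unfolding fix). -/
def Proc.substP : Proc V → ℕ → Proc V → Proc V
  | .broadcast c e P, j, S => .broadcast c e (Proc.substP P j S)
  | .rcv c P Q, j, S => .rcv c (Proc.substP P j (Proc.liftD S 0)) (Proc.substP Q j S)
  | .sigma P, j, S => .sigma (Proc.substP P j S)
  | .tau P, j, S => .tau (Proc.substP P j S)
  | .sum P Q, j, S => .sum (Proc.substP P j S) (Proc.substP Q j S)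
  | .mtch b P Q, j, S => .mtch b (Proc.substP P j S) (Proc.substP Q j S)
  | .pvar X, j, S => if X = j then S else if j < X then .pvar (X - 1) else .pvar X
  | .nil, _, _ => .nil
  | .fix P, j, S => .fix (Proc.substP P (j + 1) (Proc.liftP S 0))

/-- Iterated time-delay prefix σ^n.P -/
def Proc.sigmaIter : ℕ → Proc V → Proc V
  | 0, P => P
  | n + 1, P => .sigma (Proc.sigmaIter n P)

/-- Does the process contain an unguarded receiver listening on channel c? -/
def Proc.hasRcv : Proc V → Chan → Bool
  | .broadcast _ _ _, _ => false
  | .rcv d _ _, c => d == c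
  | .sigma _, _ => false
  | .tau _, _ => false
  | .sum P Q, c => Proc.hasRcv P c || Proc.hasRcv Q c
  | .mtch _ _ _, _ => false
  | .pvar _, _ => false
  | .nil, _ => false
  | .fix P, c => Proc.hasRcv P c

/-- Does the system term contain an unguarded receiver listening on channel c? -/
def Sys.hasRcv : Sys V → Chan → Bool
  | .proc P, c => P.hasRcv c
  | .active _ _, _ => false
  | .par W1 W2, c => Sys.hasRcv W1 c || Sys.hasRcv W2 c
  | .res d _ _ W, c => if d = c then false else Sys.hasRcv W c

/-- The predicate rcv(Γ ▷ W, c): channel c is idle in Γ and W contains an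
unguarded receiver actively awaiting a message on c. -/
def Isrcv (Γ : ChanEnv V) (W : Sys V) (c : Chan) : Prop :=
  (Γ c).1 = 0 ∧ W.hasRcv c = true

/- Closedness of terms: data variables < dk and process variables < pk. -/

def Exp.closedUnder : Exp V → ℕ → Bool
  | .val _, _ => true
  | .var i, dk => decide (i < dk)

def BExp.closedUnder : BExp V → ℕ → Bool
  | .beq e1 e2, dk => e1.closedUnder dk && e2.closedUnder dk
  | .exposed _, _ => true

def Proc.closedUnder : Proc V → ℕ → ℕ → Bool
  | .broadcast _ e P, dk, pk => e.closedUnder dk && Proc.closedUnder P dk pk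
  | .rcv _ P Q, dk, pk => Proc.closedUnder P (dk + 1) pk && Proc.closedUnder Q dk pk
  | .sigma P, dk, pk => Proc.closedUnder P dk pk
  | .tau P, dk, pk => Proc.closedUnder P dk pk
  | .sum P Q, dk, pk => Proc.closedUnder P dk pk && Proc.closedUnder Q dk pk
  | .mtch b P Q, dk, pk => b.closedUnder dk && Proc.closedUnder P dk pk && Proc.closedUnder Q dk pk
  | .pvar X, _, pk => decide (X < pk)
  | .nil, _, _ => true
  | .fix P, dk, pk => Proc.closedUnder P dk (pk + 1)

def Sys.closedUnder : Sys V → ℕ → ℕ → Bool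
  | .proc P, dk, pk => P.closedUnder dk pk
  | .active _ P, dk, pk => P.closedUnder (dk + 1) pk
  | .par W1 W2, dk, pk => Sys.closedUnder W1 dk pk && Sys.closedUnder W2 dk pk
  | .res _ _ _ W, dk, pk => Sys.closedUnder W dk pk

/-- Process variable k does not occur unguarded (i.e. every occurrence of k lies
under a time-consuming construct: broadcast, receiver, σ-prefix or matching). -/
def Proc.guardedVar : Proc V → ℕ → Bool
  | .broadcast _ _ _, _ => true
  | .rcv _ _ _, _ => true
  | .sigma _, _ => true
  | .tau P, k => Proc.guardedVar P k
  | .sum P Q, k => Proc.guardedVar P k && Proc.guardedVar Q k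
  | .mtch _ _ _, _ => true
  | .pvar X, k => X != k
  | .nil, _ => true
  | .fix P, k => Proc.guardedVar P (k + 1)

/-- Every recursion fix X.P in the term has its recursion variable guarded by a
time-consuming construct. -/
def Proc.wfRec : Proc V → Bool
  | .broadcast _ _ P => Proc.wfRec P
  | .rcv _ P Q => Proc.wfRec P && Proc.wfRec Q
  | .sigma P => Proc.wfRec P
  | .tau P => Proc.wfRec P
  | .sum P Q => Proc.wfRec P && Proc.wfRec Q
  | .mtch _ P Q => Proc.wfRec P && Proc.wfRec Q
  | .pvar _ => true
  | .nil => true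
  | .fix P => Proc.wfRec P && Proc.guardedVar P 0

def Sys.wfRec : Sys V → Bool
  | .proc P => P.wfRec
  | .active _ P => P.wfRec
  | .par W1 W2 => Sys.wfRec W1 && Sys.wfRec W2
  | .res _ _ _ W => Sys.wfRec W

/-- A legal system term: closed, and all recursion variables guarded. -/
def Sys.proper (W : Sys V) : Prop :=
  W.closedUnder 0 0 = true ∧ W.wfRec = true

/- Free channel occurrences. -/

def BExp.usesChan : BExp V → Chan → Bool
  | .beq _ _, _ => false
  | .exposed d, c => d == c

def Proc.freeChan : Proc V → Chan → Bool
  | .broadcast d _ P, c => d == c || Proc.freeChan P c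
  | .rcv d P Q, c => d == c || Proc.freeChan P c || Proc.freeChan Q c
  | .sigma P, c => Proc.freeChan P c
  | .tau P, c => Proc.freeChan P c
  | .sum P Q, c => Proc.freeChan P c || Proc.freeChan Q c
  | .mtch b P Q, c => b.usesChan c || Proc.freeChan P c || Proc.freeChan Q c
  | .pvar _, _ => false
  | .nil, _ => false
  | .fix P, c => Proc.freeChan P c

def Sys.freeChan : Sys V → Chan → Bool
  | .proc P, c => P.freeChan c
  | .active d P, c => d == c || P.freeChan c
  | .par W1 W2, c => Sys.freeChan W1 c || Sys.freeChan W2 c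
  | .res d _ _ W, c => if d = c then false else Sys.freeChan W c

/-- Labels of the intensional semantics. -/
inductive Label (V : Type) : Type where
  | out (c : Chan) (v : V)    -- c!v
  | inp (c : Chan) (v : V)    -- c?v
  | tau
  | sigma

def Label.usesChan : Label V → Chan → Prop
  | .out d _, c => d = c
  | .inp d _, c => d = c
  | .tau, _ => False
  | .sigma, _ => False

/-- Updating a channel environment at channel c upon a broadcast (or input) of
value v: this models collisions. -/
def updBcast (errv : V) (δ : V → ℕ) (Γ : ChanEnv V) (c : Chan) (v : V) : ChanEnv V :=
  fun d => if d = c then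
      (if (Γ c).1 = 0 then (δ v, v) else (max (δ v) (Γ c).1, errv))
    else Γ d

/-- The channel-environment update upd_λ(Γ). -/
def updL (errv : V) (δ : V → ℕ) : Label V → ChanEnv V → ChanEnv V
  | .out c v, Γ => updBcast errv δ Γ c v
  | .inp c v, Γ => updBcast errv δ Γ c v
  | .tau, Γ => Γ
  | .sigma, Γ => fun c => ((Γ c).1 - 1, (Γ c).2)

/-- Γ[c ↦ p] -/
def updEnv (Γ : ChanEnv V) (c : Chan) (p : ℕ × V) : ChanEnv V :=
  fun d => if d = c then p else Γ d

/-- Evaluation of (closed) boolean expressions relative to a channel environment. -/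
inductive BEval (Γ : ChanEnv V) : BExp V → Bool → Prop where
  | beqT {e1 e2 : Exp V} {v : V} :
      e1.eval = some v → e2.eval = some v → BEval Γ (.beq e1 e2) true
  | beqF {e1 e2 : Exp V} {v1 v2 : V} :
      e1.eval = some v1 → e2.eval = some v2 → v1 ≠ v2 → BEval Γ (.beq e1 e2) false
  | expT {c : Chan} : 0 < (Γ c).1 → BEval Γ (.exposed c) true
  | expF {c : Chan} : (Γ c).1 = 0 → BEval Γ (.exposed c) false

/-- The intensional semantics of CCCP: Γ ▷ W --λ--> W'.
Parameters: `errv` is the error value, `δ` gives the transmission time of values. -/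
inductive Step (errv : V) (δ : V → ℕ) : ChanEnv V → Sys V → Label V → Sys V → Prop where
  -- (Snd)
  | snd {Γ : ChanEnv V} {c : Chan} {e : Exp V} {v : V} {P : Proc V} :
      e.eval = some v →
      Step errv δ Γ (.proc (.broadcast c e P)) (.out c v) (.proc (Proc.sigmaIter (δ v) P))
  -- (Rcv)
  | rcv {Γ : ChanEnv V} {c : Chan} {P Q : Proc V} {v : V} :
      (Γ c).1 = 0 →
      Step errv δ Γ (.proc (.rcv c P Q)) (.inp c v) (.active c P)
  -- (RcvIgn)
  | rcvIgn {Γ : ChanEnv V} {W : Sys V} {c : Chan} {v : V} :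
      ¬ Isrcv Γ W c →
      Step errv δ Γ W (.inp c v) W
  -- (Sync) and its symmetric counterpart
  | sync {Γ : ChanEnv V} {W1 W2 W1' W2' : Sys V} {c : Chan} {v : V} :
      Step errv δ Γ W1 (.out c v) W1' → Step errv δ Γ W2 (.inp c v) W2' →
      Step errv δ Γ (.par W1 W2) (.out c v) (.par W1' W2')
  | syncR {Γ : ChanEnv V} {W1 W2 W1' W2' : Sys V} {c : Chan} {v : V} :
      Step errv δ Γ W1 (.inp c v) W1' → Step errv δ Γ W2 (.out c v) W2' →
      Step errv δ Γ (.par W1 W2) (.out c v) (.par W1' W2')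
  -- (RcvPar)
  | rcvPar {Γ : ChanEnv V} {W1 W2 W1' W2' : Sys V} {c : Chan} {v : V} :
      Step errv δ Γ W1 (.inp c v) W1' → Step errv δ Γ W2 (.inp c v) W2' →
      Step errv δ Γ (.par W1 W2) (.inp c v) (.par W1' W2')
  -- (TimeNil)
  | timeNil {Γ : ChanEnv V} :
      Step errv δ Γ (.proc .nil) .sigma (.proc .nil)
  -- (Sleep)
  | sleep {Γ : ChanEnv V} {P : Proc V} :
      Step errv δ Γ (.proc (.sigma P)) .sigma (.proc P)
  -- (ActRcv)
  | actRcv {Γ : ChanEnv V} {c : Chan} {P : Proc V} :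
      1 < (Γ c).1 →
      Step errv δ Γ (.active c P) .sigma (.active c P)
  -- (EndRcv)
  | endRcv {Γ : ChanEnv V} {c : Chan} {P : Proc V} {w : V} :
      (Γ c).1 = 1 → (Γ c).2 = w →
      Step errv δ Γ (.active c P) .sigma (.proc (Proc.substD P 0 w))
  -- (Timeout)
  | timeout {Γ : ChanEnv V} {c : Chan} {P Q : Proc V} :
      (Γ c).1 = 0 →
      Step errv δ Γ (.proc (.rcv c P Q)) .sigma (.proc Q)
  -- (RcvLate)
  | rcvLate {Γ : ChanEnv V} {c : Chan} {P Q : Proc V} :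
      0 < (Γ c).1 →
      Step errv δ Γ (.proc (.rcv c P Q)) .tau (.active c (Proc.liftD (Proc.substD P 0 errv) 0))
  -- (Tau)
  | tauStep {Γ : ChanEnv V} {P : Proc V} :
      Step errv δ Γ (.proc (.tau P)) .tau (.proc P)
  -- (Then)
  | thenB {Γ : ChanEnv V} {b : BExp V} {P Q : Proc V} :
      BEval Γ b true →
      Step errv δ Γ (.proc (.mtch b P Q)) .tau (.proc (.sigma P))
  -- (Else)
  | elseB {Γ : ChanEnv V} {b : BExp V} {P Q : Proc V} :
      BEval Γ b false →
      Step errv δ Γ (.proc (.mtch b P Q)) .tau (.proc (.sigma Q))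
  -- (TimePar)
  | timePar {Γ : ChanEnv V} {W1 W2 W1' W2' : Sys V} :
      Step errv δ Γ W1 .sigma W1' → Step errv δ Γ W2 .sigma W2' →
      Step errv δ Γ (.par W1 W2) .sigma (.par W1' W2')
  -- (TauPar) and its symmetric counterpart
  | tauParL {Γ : ChanEnv V} {W1 W2 W1' : Sys V} :
      Step errv δ Γ W1 .tau W1' →
      Step errv δ Γ (.par W1 W2) .tau (.par W1' W2)
  | tauParR {Γ : ChanEnv V} {W1 W2 W2' : Sys V} :
      Step errv δ Γ W2 .tau W2' →
      Step errv δ Γ (.par W1 W2) .tau (.par W1 W2')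
  -- (Rec)
  | recS {Γ : ChanEnv V} {P : Proc V} {lam : Label V} {W : Sys V} :
      Step errv δ Γ (.proc (Proc.substP P 0 (.fix P))) lam W →
      Step errv δ Γ (.proc (.fix P)) lam W
  -- (Sum) and its symmetric counterpart
  | sumL {Γ : ChanEnv V} {P Q : Proc V} {lam : Label V} {W : Sys V} :
      Step errv δ Γ (.proc P) lam W → (lam = .tau ∨ ∃ c v, lam = .out c v) →
      Step errv δ Γ (.proc (.sum P Q)) lam W
  | sumR {Γ : ChanEnv V} {P Q : Proc V} {lam : Label V} {W : Sys V} :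
      Step errv δ Γ (.proc Q) lam W → (lam = .tau ∨ ∃ c v, lam = .out c v) →
      Step errv δ Γ (.proc (.sum P Q)) lam W
  -- (SumTime)
  | sumTime {Γ : ChanEnv V} {P Q P' Q' : Proc V} :
      Step errv δ Γ (.proc P) .sigma (.proc P') → Step errv δ Γ (.proc Q) .sigma (.proc Q') →
      Step errv δ Γ (.proc (.sum P Q)) .sigma (.proc (.sum P' Q'))
  -- (SumRcv) and its symmetric counterpart
  | sumRcvL {Γ : ChanEnv V} {P Q : Proc V} {c : Chan} {v : V} {W : Sys V} :
      Step errv δ Γ (.proc P) (.inp c v) W → Isrcv Γ (.proc P) c →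
      Step errv δ Γ (.proc (.sum P Q)) (.inp c v) W
  | sumRcvR {Γ : ChanEnv V} {P Q : Proc V} {c : Chan} {v : V} {W : Sys V} :
      Step errv δ Γ (.proc Q) (.inp c v) W → Isrcv Γ (.proc Q) c →
      Step errv δ Γ (.proc (.sum P Q)) (.inp c v) W
  -- (ResI)
  | resI {Γ : ChanEnv V} {c : Chan} {n : ℕ} {v w : V} {W W' : Sys V} :
      Step errv δ (updEnv Γ c (n, v)) W (.out c w) W' →
      Step errv δ Γ (.res c n v W) .tau
        (.res c (updBcast errv δ (updEnv Γ c (n, v)) c w c).1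
                (updBcast errv δ (updEnv Γ c (n, v)) c w c).2 W')
  -- (ResV)
  | resV {Γ : ChanEnv V} {c : Chan} {n : ℕ} {v : V} {W W' : Sys V} {lam : Label V} :
      Step errv δ (updEnv Γ c (n, v)) W lam W' →
      ¬ lam.usesChan c → lam ≠ .sigma →
      Step errv δ Γ (.res c n v W) lam (.res c n v W')
  -- time passage under restriction
  | resT {Γ : ChanEnv V} {c : Chan} {n : ℕ} {v : V} {W W' : Sys V} :
      Step errv δ (updEnv Γ c (n, v)) W .sigma W' →
      Step errv δ Γ (.res c n v W) .sigma (.res c (n - 1) v W')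

/-- Configurations. -/
abbrev Config (V : Type) : Type := ChanEnv V × Sys V

/-- Instantaneous reductions (broadcast or internal step). -/
def RedI (errv : V) (δ : V → ℕ) (C C' : Config V) : Prop :=
  (Step errv δ C.1 C.2 .tau C'.2 ∧ C'.1 = C.1) ∨
  (∃ c v, Step errv δ C.1 C.2 (.out c v) C'.2 ∧ C'.1 = updBcast errv δ C.1 c v)

/-- Timed reductions. -/
def RedT (errv : V) (δ : V → ℕ) (C C' : Config V) : Prop :=
  Step errv δ C.1 C.2 .sigma C'.2 ∧ C'.1 = updL errv δ .sigma C.1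

/-- Reductions of configurations. -/
def Red (errv : V) (δ : V → ℕ) (C C' : Config V) : Prop :=
  RedI errv δ C C' ∨ RedT errv δ C C'

def RedStar (errv : V) (δ : V → ℕ) : Config V → Config V → Prop :=
  Relation.ReflTransGen (Red errv δ)

def RedIStar (errv : V) (δ : V → ℕ) : Config V → Config V → Prop :=
  Relation.ReflTransGen (RedI errv δ)

/-- Iteration of a relation a fixed number of times. -/
def relPow {α : Type _} (r : α → α → Prop) : ℕ → α → α → Prop
  | 0 => Eq
  | n + 1 => fun a c => ∃ b, r a b ∧ relPow r n b c

/-- Strong barb: channel c is exposed. -/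
def Barb (C : Config V) (c : Chan) : Prop := 0 < (C.1 c).1

/-- Weak barb. -/
def WBarb (errv : V) (δ : V → ℕ) (C : Config V) (c : Chan) : Prop :=
  ∃ C', RedStar errv δ C C' ∧ Barb C' c

/-- Extensional actions. -/
inductive Act (V : Type) : Type where
  | inp (c : Chan) (v : V)     -- c?v
  | time                       -- σ
  | tauA                       -- τ
  | deliver (c : Chan) (v : V) -- γ(c,v)
  | idle (c : Chan)            -- ι(c)

/-- The extensional LTS over configurations. -/
inductive EStep (errv : V) (δ : V → ℕ) : Config V → Act V → Config V → Prop where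
  | einp {Γ : ChanEnv V} {W W' : Sys V} {c : Chan} {v : V} :
      Step errv δ Γ W (.inp c v) W' →
      EStep errv δ (Γ, W) (.inp c v) (updBcast errv δ Γ c v, W')
  | etime {Γ : ChanEnv V} {W W' : Sys V} :
      Step errv δ Γ W .sigma W' →
      EStep errv δ (Γ, W) .time (updL errv δ .sigma Γ, W')
  | eshh {Γ : ChanEnv V} {W W' : Sys V} {c : Chan} {v : V} :
      Step errv δ Γ W (.out c v) W' →
      EStep errv δ (Γ, W) .tauA (updBcast errv δ Γ c v, W')
  | etau {Γ : ChanEnv V} {W W' : Sys V} :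
      Step errv δ Γ W .tau W' →
      EStep errv δ (Γ, W) .tauA (Γ, W')
  | edeliver {Γ : ChanEnv V} {W W' : Sys V} {c : Chan} {v : V} :
      Γ c = (1, v) → Step errv δ Γ W .sigma W' →
      EStep errv δ (Γ, W) (.deliver c v) (updL errv δ .sigma Γ, W')
  | eidle {Γ : ChanEnv V} {W : Sys V} {c : Chan} :
      (Γ c).1 = 0 →
      EStep errv δ (Γ, W) (.idle c) (Γ, W)

/-- Weak internal moves ⟹. -/
def TauStar (errv : V) (δ : V → ℕ) : Config V → Config V → Prop :=
  Relation.ReflTransGen (fun C C' => EStep errv δ C .tauA C')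

/-- Weak extensional action C ⟹α⟹ C'. -/
def WStep (errv : V) (δ : V → ℕ) (C : Config V) (α : Act V) (C' : Config V) : Prop :=
  ∃ C1 C2, TauStar errv δ C C1 ∧ EStep errv δ C1 α C2 ∧ TauStar errv δ C2 C'

/-- C ⟹α̂⟹ C'. -/
def WHat (errv : V) (δ : V → ℕ) (C : Config V) (α : Act V) (C' : Config V) : Prop :=
  match α with
  | .tauA => TauStar errv δ C C'
  | _ => WStep errv δ C α C'

/-- (Weak) bisimulations on the extensional LTS. -/
def IsBisim (errv : V) (δ : V → ℕ) (R : Config V → Config V → Prop) : Prop :=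
  Symmetric R ∧
  ∀ C1 C2, R C1 C2 → ∀ (α : Act V) C1', EStep errv δ C1 α C1' →
    ∃ C2', WHat errv δ C2 α C2' ∧ R C1' C2'

/-- Weak bisimilarity ≈. -/
def Bisim (errv : V) (δ : V → ℕ) (C1 C2 : Config V) : Prop :=
  ∃ R, IsBisim errv δ R ∧ R C1 C2

/-- Barb-preserving relations. -/
def BarbPreserving (errv : V) (δ : V → ℕ) (R : Config V → Config V → Prop) : Prop :=
  ∀ C1 C2, R C1 C2 → ∀ c, WBarb errv δ C1 c → WBarb errv δ C2 c

/-- Reduction-closed relations. -/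
def ReductionClosed (errv : V) (δ : V → ℕ) (R : Config V → Config V → Prop) : Prop :=
  ∀ C1 C2, R C1 C2 → ∀ C1', Red errv δ C1 C1' →
    ∃ C2', RedStar errv δ C2 C2' ∧ R C1' C2'

/-- Contextual relations. -/
def Contextual (R : Config V → Config V → Prop) : Prop :=
  ∀ Γ1 W1 Γ2 W2, R (Γ1, W1) (Γ2, W2) →
    ∀ W : Sys V, W.proper → R (Γ1, .par W1 W) (Γ2, .par W2 W)

/-- Reduction barbed congruence ≃: the largest symmetric, barb-preserving,
reduction-closed and contextual relation. -/
def RBC (errv : V) (δ : V → ℕ) (C1 C2 : Config V) : Prop :=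
  ∃ R, Symmetric R ∧ BarbPreserving errv δ R ∧ ReductionClosed errv δ R ∧
    Contextual R ∧ R C1 C2

/-- Well-formed configurations. -/
inductive WF : ChanEnv V → Sys V → Prop where
  | wfProc {Γ : ChanEnv V} (P : Proc V) : WF Γ (.proc P)
  | wfActive {Γ : ChanEnv V} {c : Chan} (P : Proc V) : 0 < (Γ c).1 → WF Γ (.active c P)
  | wfPar {Γ : ChanEnv V} {W1 W2 : Sys V} : WF Γ W1 → WF Γ W2 → WF Γ (.par W1 W2)
  | wfRes {Γ : ChanEnv V} {c : Chan} {n : ℕ} {v : V} {W : Sys V} :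
      WF (updEnv Γ c (n, v)) W → WF Γ (.res c n v W)

/-- Comparison of channel environments: Γ ≤ Γ'. -/
def EnvLE (Γ Γ' : ChanEnv V) : Prop := ∀ c : Chan, (Γ c).1 ≤ (Γ' c).1

/- ==== auxiliary lemmas for input enabledness ==== -/

/-- substitution preserves unguarded receivers -/
lemma Proc.hasRcv_substP {V : Type} :
    ∀ (P : Proc V) (j : ℕ) (S : Proc V) (c : Chan),
      P.hasRcv c = true → (P.substP j S).hasRcv c = true := by
  intro P
  induction P with
  | rcv d P Q ihP ihQ => intro j S c h; simpa [Proc.substP, Proc.hasRcv] using h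
  | sum P Q ihP ihQ =>
      intro j S c h
      simp [Proc.hasRcv, Proc.substP] at h ⊢
      rcases h with h | h
      · exact Or.inl (ihP _ _ _ h)
      · exact Or.inr (ihQ _ _ _ h)
  | fix P ih =>
      intro j S c h
      simp [Proc.hasRcv, Proc.substP] at h ⊢
      exact ih _ _ _ h
  | _ => intro j S c h <;> simp [Proc.hasRcv] at h

/-- lifting makes the lifted variable guarded (it does not occur) -/
lemma Proc.guardedVar_liftP_self {V : Type} :
    ∀ (S : Proc V) (k : ℕ), (S.liftP k).guardedVar k = true := by
  intro S
  induction S with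
  | pvar X =>
      intro k
      by_cases h : X < k <;> simp [Proc.liftP, Proc.guardedVar, h] <;> omega
  | _ =>
      intro k <;> simp_all [Proc.liftP, Proc.guardedVar]

/-- lifting at k commutes with guardedness above k -/
lemma Proc.guardedVar_liftP {V : Type} :
    ∀ (S : Proc V) (k m : ℕ), k ≤ m →
      (S.liftP k).guardedVar (m + 1) = S.guardedVar m := by
  intro S
  induction S with
  | pvar X =>
      intro k m hk
      by_cases h : X < k
      · have h1 : X ≠ m + 1 := by omega
        have h2 : X ≠ m := by omega
        simp only [Proc.liftP, if_pos h, Proc.guardedVar]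
        exact Bool.eq_iff_iff.mpr (by simp [h1, h2])
      · simp only [Proc.liftP, if_neg h, Proc.guardedVar]
        simp [bne]
  | fix P ih =>
      intro k m hk
      simp [Proc.liftP, Proc.guardedVar]
      exact ih (k+1) (m+1) (by omega)
  | _ =>
      intro k m hk <;> simp_all [Proc.liftP, Proc.guardedVar]

/-- lifting at k does not affect guardedness below k -/
lemma Proc.guardedVar_liftP_lt {V : Type} :
    ∀ (S : Proc V) (k m : ℕ), m < k →
      (S.liftP k).guardedVar m = S.guardedVar m := by
  intro S
  induction S with
  | pvar X =>
      intro k m hk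
      by_cases h : X < k
      · simp [Proc.liftP, h, Proc.guardedVar]
      · have h1 : X + 1 ≠ m := by omega
        have h2 : X ≠ m := by omega
        simp only [Proc.liftP, if_neg h, Proc.guardedVar]
        exact Bool.eq_iff_iff.mpr (by simp [h1, h2])
  | fix P ih =>
      intro k m hk
      simp [Proc.liftP, Proc.guardedVar]
      exact ih (k+1) (m+1) (by omega)
  | _ =>
      intro k m hk <;> simp_all [Proc.liftP, Proc.guardedVar]

/-- substitution preserves guardedness of lower variables -/
lemma Proc.guardedVar_substP {V : Type} :
    ∀ (Q : Proc V) (j m : ℕ) (S : Proc V), m < j →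
      Q.guardedVar m = true → S.guardedVar m = true →
      (Q.substP j S).guardedVar m = true := by
  intro Q
  induction Q with
  | pvar X =>
      intro j m S hmj hQ hS
      simp [Proc.guardedVar] at hQ
      by_cases h : X = j
      · simpa [Proc.substP, h] using hS
      · by_cases h2 : j < X <;> simp [Proc.substP, h, h2, Proc.guardedVar] <;> omega
  | fix P ih =>
      intro j m S hmj hQ hS
      simp [Proc.substP, Proc.guardedVar] at hQ ⊢
      refine ih (j+1) (m+1) (Proc.liftP S 0) (by omega) hQ ?_
      rw [Proc.guardedVar_liftP S 0 m (Nat.zero_le m)]; exact hS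
  | _ =>
      intro j m S hmj hQ hS <;>
        simp_all [Proc.substP, Proc.guardedVar]

/-- data lifting does not affect process variables -/
lemma Proc.guardedVar_liftD {V : Type} :
    ∀ (S : Proc V) (k m : ℕ), (S.liftD k).guardedVar m = S.guardedVar m := by
  intro S
  induction S with
  | _ => intro k m <;> simp_all [Proc.liftD, Proc.guardedVar]

lemma Proc.wfRec_liftD {V : Type} :
    ∀ (S : Proc V) (k : ℕ), (S.liftD k).wfRec = S.wfRec := by
  intro S
  induction S with
  | fix P ih =>
      intro k
      simp [Proc.liftD, Proc.wfRec, ih, Proc.guardedVar_liftD]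
  | _ => intro k <;> simp_all [Proc.liftD, Proc.wfRec]

/-- lifting preserves well-formed recursion -/
lemma Proc.wfRec_liftP {V : Type} :
    ∀ (S : Proc V) (k : ℕ), (S.liftP k).wfRec = S.wfRec := by
  intro S
  induction S with
  | fix P ih =>
      intro k
      simp only [Proc.liftP, Proc.wfRec, ih]
      rw [Proc.guardedVar_liftP_lt P (k+1) 0 (by omega)]
  | pvar X =>
      intro k
      by_cases h : X < k <;> simp [Proc.liftP, Proc.wfRec, h]
  | _ =>
      intro k <;> simp_all [Proc.liftP, Proc.wfRec]

/-- substitution preserves well-formed recursion -/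
lemma Proc.wfRec_substP {V : Type} :
    ∀ (Q : Proc V) (j : ℕ) (S : Proc V),
      Q.wfRec = true → S.wfRec = true → (Q.substP j S).wfRec = true := by
  intro Q
  induction Q with
  | pvar X =>
      intro j S hQ hS
      by_cases h : X = j
      · simpa [Proc.substP, h] using hS
      · by_cases h2 : j < X <;> simp [Proc.substP, h, h2, Proc.wfRec]
  | fix P ih =>
      intro j S hQ hS
      simp [Proc.wfRec] at hQ
      simp [Proc.substP, Proc.wfRec]
      constructor
      · exact ih (j+1) _ hQ.1 (by rw [Proc.wfRec_liftP]; exact hS)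
      · exact Proc.guardedVar_substP P (j+1) 0 _ (by omega) hQ.2
          (Proc.guardedVar_liftP_self S 0)
  | _ =>
      intro j S hQ hS <;>
        simp_all [Proc.substP, Proc.wfRec, Proc.wfRec_liftD]

/-- measure: nesting of unguarded sums and recursions -/
def Proc.uw {V : Type} : Proc V → ℕ
  | .sum P Q => Proc.uw P + Proc.uw Q + 1
  | .fix P => Proc.uw P + 1
  | _ => 0

/-- substituting for a guarded variable does not change the measure -/
lemma Proc.uw_substP {V : Type} :
    ∀ (Q : Proc V) (j : ℕ) (S : Proc V), Q.guardedVar j = true →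
      (Q.substP j S).uw = Q.uw := by
  intro Q
  induction Q with
  | pvar X =>
      intro j S h
      simp [Proc.guardedVar] at h
      by_cases h2 : j < X <;> simp [Proc.substP, h, h2, Proc.uw]
  | sum P Q ihP ihQ =>
      intro j S h
      simp [Proc.guardedVar] at h
      simp [Proc.substP, Proc.uw, ihP _ _ h.1, ihQ _ _ h.2]
  | fix P ih =>
      intro j S h
      simp [Proc.guardedVar] at h
      simp [Proc.substP, Proc.uw, ih _ _ h]
  | _ =>
      intro j S h <;> simp [Proc.substP, Proc.uw]

/-- key lemma for processes: a well-formed process with an unguarded receiver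
on an idle channel can receive any value, ending in an active receiver -/
lemma proc_enabled {V : Type} (errv : V) (δ : V → ℕ) (Γ : ChanEnv V) (c : Chan)
    (h0 : (Γ c).1 = 0) :
    ∀ (n : ℕ) (P : Proc V), P.uw = n → P.wfRec = true → P.hasRcv c = true →
      ∃ P' : Proc V, ∀ w : V, Step errv δ Γ (.proc P) (.inp c w) (.active c P') := by
  intro n
  induction n using Nat.strong_induction_on with
  | _ n IH =>
    intro P hn hwf hr
    cases P with
    | rcv d P Q =>
        simp [Proc.hasRcv] at hr
        subst hr
        exact ⟨P, fun w => Step.rcv h0⟩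
    | sum P Q =>
        simp [Proc.hasRcv] at hr
        simp [Proc.wfRec] at hwf
        rcases hr with h | h
        · obtain ⟨P', hP'⟩ := IH P.uw (by subst hn; simp [Proc.uw]) P rfl hwf.1 h
          exact ⟨P', fun w => Step.sumRcvL (hP' w) ⟨h0, h⟩⟩
        · obtain ⟨P', hP'⟩ := IH Q.uw (by subst hn; simp [Proc.uw]) Q rfl hwf.2 h
          exact ⟨P', fun w => Step.sumRcvR (hP' w) ⟨h0, h⟩⟩
    | fix P =>
        simp [Proc.hasRcv] at hr
        simp [Proc.wfRec] at hwf
        have huw : (P.substP 0 (.fix P)).uw = P.uw := Proc.uw_substP P 0 _ hwf.2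
        obtain ⟨P', hP'⟩ := IH (P.substP 0 (.fix P)).uw
          (by subst hn; rw [huw]; simp [Proc.uw])
          (P.substP 0 (.fix P)) rfl
          (Proc.wfRec_substP P 0 _ hwf.1 (by simp [Proc.wfRec, hwf.1, hwf.2]))
          (Proc.hasRcv_substP P 0 _ c hr)
        exact ⟨P', fun w => Step.recS (hP' w)⟩
    | _ => simp [Proc.hasRcv] at hr

/-- key lemma for systems -/
lemma sys_enabled {V : Type} (errv : V) (δ : V → ℕ) (c : Chan) :
    ∀ (W : Sys V) (Γ : ChanEnv V), (Γ c).1 = 0 → W.wfRec = true → W.hasRcv c = true →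
      ∃ W' : Sys V, (∀ w : V, Step errv δ Γ W (.inp c w) W') ∧ W' ≠ W := by
  intro W
  induction W with
  | proc P =>
      intro Γ h0 hwf hr
      obtain ⟨P', hP'⟩ := proc_enabled errv δ Γ c h0 P.uw P rfl hwf hr
      exact ⟨.active c P', hP', by simp⟩
  | active d P =>
      intro Γ h0 hwf hr
      simp [Sys.hasRcv] at hr
  | par W1 W2 ih1 ih2 =>
      intro Γ h0 hwf hr
      simp [Sys.hasRcv] at hr
      simp [Sys.wfRec] at hwf
      by_cases h1 : W1.hasRcv c = true
      · obtain ⟨W1', hs1, hne1⟩ := ih1 Γ h0 hwf.1 h1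
        by_cases h2 : W2.hasRcv c = true
        · obtain ⟨W2', hs2, hne2⟩ := ih2 Γ h0 hwf.2 h2
          refine ⟨.par W1' W2', fun w => Step.rcvPar (hs1 w) (hs2 w), ?_⟩
          rw [Ne, Sys.par.injEq]
          rintro ⟨h, -⟩
          exact hne1 h
        · refine ⟨.par W1' W2, fun w => Step.rcvPar (hs1 w) (Step.rcvIgn ?_), ?_⟩
          · rintro ⟨-, hh⟩; exact h2 hh
          · rw [Ne, Sys.par.injEq]
            rintro ⟨h, -⟩
            exact hne1 h
      · have h2 : W2.hasRcv c = true := by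
          rcases hr with h | h
          · exact absurd h h1
          · exact h
        obtain ⟨W2', hs2, hne2⟩ := ih2 Γ h0 hwf.2 h2
        refine ⟨.par W1 W2', fun w => Step.rcvPar (Step.rcvIgn ?_) (hs2 w), ?_⟩
        · rintro ⟨-, hh⟩; exact h1 hh
        · rw [Ne, Sys.par.injEq]
          rintro ⟨-, h⟩
          exact hne2 h
  | res d n v W ih =>
      intro Γ h0 hwf hr
      simp [Sys.hasRcv] at hr
      obtain ⟨hdc, hr⟩ := hr
      have hcd : ¬ c = d := fun h => hdc h.symm
      have h0' : ((updEnv Γ d (n, v)) c).1 = 0 := by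
        simp [updEnv, hcd, h0]
      obtain ⟨W', hs, hne⟩ := ih (updEnv Γ d (n, v)) h0' hwf hr
      refine ⟨.res d n v W', fun w => Step.resV (hs w) ?_ (by simp), ?_⟩
      · intro h; exact hdc h.symm
      · rw [Ne, Sys.res.injEq]
        rintro ⟨-, -, -, h⟩
        exact hne h

/-- Input enabledness (Lemma 2.4 of the paper). -/
theorem input_enabledness {V : Type} (errv : V) (δ : V → ℕ) (hδ : ∀ v : V, 1 ≤ δ v)
    (Γ : ChanEnv V) (W : Sys V) (hW : W.proper) (c : Chan) (v : V) :
    ∃ W' : Sys V,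
      Step errv δ Γ W (.inp c v) W' ∧
      (¬ Isrcv Γ W c → W' = W) ∧
      (Isrcv Γ W c → W' ≠ W ∧ ∀ w : V, Step errv δ Γ W (.inp c w) W') := by
  by_cases hI : Isrcv Γ W c
  · obtain ⟨h0, hr⟩ := hI
    obtain ⟨W', hs, hne⟩ := sys_enabled errv δ c W Γ h0 hW.2 hr
    exact ⟨W', hs v, fun hn => absurd ⟨h0, hr⟩ hn, fun _ => ⟨hne, hs⟩⟩
  · exact ⟨W, Step.rcvIgn hI, fun _ => rfl, fun h => absurd h hI⟩

end CCCP
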